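/- Fix integers P ≥ 1 and N > 2P+1. The following are equivalent: (a) for every divisor d of N with d > 1, there exists an integer n with P+1 ≤ n ≤ N−P−1 such that N divides d·n and gcd(d, d·n/N) = 1 (equivalently, exp(2πi·n/N) is a root of the d-th cyclotomic polynomial Φ_d); (b) H(N) ≥ P+1. -/

import Mathlib

/-- The function h from the paper: h(d) = 2 + 2/(d−1) for odd d; h(2) = 2;
h(d) = 2 + 8/(d−4) for even d ≠ 2 with 4 ∤ d; h(d) = 2 + 4/(d−2) when 4 ∣ d. -/
noncomputable def hfun (d : ℕ) : ℝ :=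
  if d = 2 then 2
  else if ¬ 2 ∣ d then 2 + 2 / ((d : ℝ) - 1)
  else if 4 ∣ d then 2 + 4 / ((d : ℝ) - 2)
  else 2 + 8 / ((d : ℝ) - 4)

/-- H(N) = N / max{h(d) : d ∣ N, d > 1}. -/
noncomputable def Hfun (N : ℕ) : ℝ :=
  (N : ℝ) / sSup (hfun '' {d : ℕ | d ∣ N ∧ 1 < d})

def ffun (d : ℕ) : ℕ :=
  if d = 2 then 1
  else if ¬ 2 ∣ d then (d-1)/2
  else if 4 ∣ d then d/2 - 1
  else d/2 - 2

lemma cases13 (d : ℕ) (hd : 1 < d) :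
    (d = 2 ∧ ffun d = 1) ∨
    (∃ c, 1 ≤ c ∧ d = 2*c+1 ∧ ffun d = c) ∨
    (∃ c, 1 ≤ c ∧ ¬ 2 ∣ c ∧ d = 2*c+2 ∧ ffun d = c) ∨
    (∃ c, 1 ≤ c ∧ ¬ 2 ∣ c ∧ d = 2*c+4 ∧ ffun d = c) := by
  by_cases h1 : d = 2
  · left; exact ⟨h1, by simp [ffun, h1]⟩
  by_cases h2 : 2 ∣ d
  · by_cases h3 : 4 ∣ d
    · right; right; left
      exact ⟨d/2-1, by omega, by omega, by omega, by simp [ffun, h1, h2, h3]⟩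
    · right; right; right
      exact ⟨d/2-2, by omega, by omega, by omega, by simp [ffun, h1, h2, h3]⟩
  · right; left
    exact ⟨(d-1)/2, by omega, by omega, by simp [ffun, h1, h2]⟩

lemma gcd_ffun (d : ℕ) (hd : 1 < d) : Nat.gcd d (ffun d) = 1 := by
  rcases cases13 d hd with ⟨h1, h2⟩ | ⟨c, hc, h1, h2⟩ | ⟨c, hc, hco, h1, h2⟩ | ⟨c, hc, hco, h1, h2⟩
  · rw [h2, h1]; decide
  · rw [h2, h1]
    have : Nat.gcd (1 + 2 * c) c = Nat.gcd 1 c := Nat.gcd_add_mul_right_left c 1 2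
    rw [show 2*c+1 = 1+2*c by ring, this, Nat.gcd_one_left]
  · rw [h2, h1]
    set g := Nat.gcd (2*c+2) c with hg
    have hg1 : g ∣ 2*c+2 := Nat.gcd_dvd_left _ _
    have hg2 : g ∣ c := Nat.gcd_dvd_right _ _
    have hg3 : g ∣ 2 := by
      have := Nat.dvd_sub hg1 (hg2.mul_left 2)
      simpa [show 2*c+2 - 2*c = 2 by omega] using this
    rcases (Nat.dvd_prime Nat.prime_two).mp hg3 with h | h
    · exact h
    · exfalso; rw [h] at hg2; omega
  · rw [h2, h1]
    set g := Nat.gcd (2*c+4) c with hg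
    have hg1 : g ∣ 2*c+4 := Nat.gcd_dvd_left _ _
    have hg2 : g ∣ c := Nat.gcd_dvd_right _ _
    have hg3 : g ∣ 4 := by
      have := Nat.dvd_sub hg1 (hg2.mul_left 2)
      simpa [show 2*c+4 - 2*c = 4 by omega] using this
    have h2c : ¬ (2:ℕ) ∣ g := by
      intro h2g
      exact hco (h2g.trans hg2)
    have := Nat.le_of_dvd (by norm_num) hg3
    interval_cases g
    · omega
    · rfl
    · exact absurd (dvd_refl 2) h2c
    · exact absurd (by omega : ¬ (3:ℕ) ∣ 4) (not_not.mpr hg3)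
    · exact absurd ⟨2, rfl⟩ h2c

lemma ffun_pos (d : ℕ) (hd : 1 < d) : 0 < ffun d := by
  rcases cases13 d hd with ⟨h1, h2⟩ | ⟨c, hc, h1, h2⟩ | ⟨c, hc, hco, h1, h2⟩ | ⟨c, hc, hco, h1, h2⟩ <;> omega

lemma two_ffun_le (d : ℕ) (hd : 1 < d) : 2 * ffun d ≤ d := by
  rcases cases13 d hd with ⟨h1, h2⟩ | ⟨c, hc, h1, h2⟩ | ⟨c, hc, hco, h1, h2⟩ | ⟨c, hc, hco, h1, h2⟩ <;> omega

lemma le_six_ffun (d : ℕ) (hd : 1 < d) : d ≤ 6 * ffun d := by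
  rcases cases13 d hd with ⟨h1, h2⟩ | ⟨c, hc, h1, h2⟩ | ⟨c, hc, hco, h1, h2⟩ | ⟨c, hc, hco, h1, h2⟩ <;> omega

lemma hfun_eq (d : ℕ) (hd : 1 < d) : hfun d = (d : ℝ) / (ffun d : ℝ) := by
  rcases cases13 d hd with ⟨h1, h2⟩ | ⟨c, hc, h1, h2⟩ | ⟨c, hc, hco, h1, h2⟩ | ⟨c, hc, hco, h1, h2⟩
  · subst h1; rw [h2]; norm_num [hfun]
  · have hd2 : d ≠ 2 := by omega
    have hd3 : ¬ 2 ∣ d := by omega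
    rw [hfun, if_neg hd2, if_pos hd3, h2, h1]
    have hc0 : (c : ℝ) ≠ 0 := by exact_mod_cast (by omega : c ≠ 0)
    push_cast
    field_simp
    ring
  · have hd2 : d ≠ 2 := by omega
    have hd3 : (2:ℕ) ∣ d := by omega
    have hd4 : (4:ℕ) ∣ d := by omega
    rw [hfun, if_neg hd2, if_neg (not_not.mpr hd3), if_pos hd4, h2, h1]
    have hc0 : (c : ℝ) ≠ 0 := by exact_mod_cast (by omega : c ≠ 0)
    push_cast
    field_simp
    ring_nf
    rw [mul_inv_cancel₀ hc0]; ring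
  · have hd2 : d ≠ 2 := by omega
    have hd3 : (2:ℕ) ∣ d := by omega
    have hd4 : ¬ (4:ℕ) ∣ d := by omega
    rw [hfun, if_neg hd2, if_neg (not_not.mpr hd3), if_neg hd4, h2, h1]
    have hc0 : (c : ℝ) ≠ 0 := by exact_mod_cast (by omega : c ≠ 0)
    push_cast
    field_simp
    ring

lemma keyC (P N d : ℕ) (hP : 1 ≤ P) (hN : 0 < N) (hdN : d ∣ N) (hd : 1 < d) :
    (∃ n : ℕ, P + 1 ≤ n ∧ n ≤ N - P - 1 ∧ N ∣ d * n ∧ Nat.gcd d (d * n / N) = 1) ↔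
      P + 1 ≤ (N / d) * ffun d := by
  obtain ⟨m, hNdm⟩ := hdN
  have hd0 : 0 < d := by omega
  have hm0 : 0 < m := by
    rcases Nat.eq_zero_or_pos m with h | h
    · subst h; omega
    · exact h
  have hmdiv : N / d = m := by rw [hNdm, Nat.mul_div_cancel_left m hd0]
  rw [hmdiv]
  constructor
  · rintro ⟨n, h1, h2, h3, h4⟩
    have hmn : m ∣ n := by
      have : d * m ∣ d * n := by rw [← hNdm]; exact h3
      exact (mul_dvd_mul_iff_left (by omega : d ≠ 0)).mp this
    obtain ⟨k, hnk⟩ := hmn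
    have hdnN : d * n / N = k := by
      rw [hnk, hNdm, show d * (m * k) = (d * m) * k by ring,
        Nat.mul_div_cancel_left _ (by positivity)]
    rw [hdnN] at h4
    subst hnk
    rw [hNdm] at h2
    have hmk1 : P + 1 ≤ m * k := h1
    have hmk2 : m * k + (P + 1) ≤ d * m := by omega
    have hkd : k < d := by
      by_contra h
      push_neg at h
      have : m * d ≤ m * k := Nat.mul_le_mul_left m h
      have : d * m = m * d := by ring
      omega
    have hk0 : 0 < k := by
      rcases Nat.eq_zero_or_pos k with h | h
      · subst h; omega
      · exact h
    have hdich : k ≤ ffun d ∨ d - k ≤ ffun d := by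
      rcases cases13 d hd with ⟨e1, e2⟩ | ⟨c, hc, e1, e2⟩ | ⟨c, hc, hco, e1, e2⟩ | ⟨c, hc, hco, e1, e2⟩
      · omega
      · omega
      · have hko : ¬ 2 ∣ k := by
          intro h2k
          have : (2:ℕ) ∣ Nat.gcd d k := Nat.dvd_gcd (by omega) h2k
          omega
        omega
      · have hko : ¬ 2 ∣ k := by
          intro h2k
          have : (2:ℕ) ∣ Nat.gcd d k := Nat.dvd_gcd (by omega) h2k
          omega
        have hkc2 : k ≠ c + 2 := by
          intro he
          have : (c+2) ∣ Nat.gcd d k := Nat.dvd_gcd (⟨2, by omega⟩) (by rw [he])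
          rw [h4] at this
          have := Nat.le_of_dvd one_pos this
          omega
        omega
    rcases hdich with h | h
    · calc P + 1 ≤ m * k := hmk1
        _ ≤ m * ffun d := Nat.mul_le_mul_left m h
    · have hsplit : m * (d - k) + m * k = m * d := by
        rw [← Nat.mul_add]
        congr 1
        omega
      have hmd : m * d = d * m := by ring
      have : P + 1 ≤ m * (d - k) := by omega
      calc P + 1 ≤ m * (d - k) := this
        _ ≤ m * ffun d := Nat.mul_le_mul_left m h
  · intro hle
    refine ⟨m * ffun d, hle, ?_, ?_, ?_⟩
    · have h2f : m * (2 * ffun d) ≤ m * d := Nat.mul_le_mul_left m (two_ffun_le d hd)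
      have he : m * (2 * ffun d) = m * ffun d + m * ffun d := by ring
      have hmd : m * d = d * m := by ring
      rw [hNdm]
      omega
    · exact ⟨ffun d, by rw [hNdm]; ring⟩
    · have : d * (m * ffun d) / N = ffun d := by
        rw [hNdm, show d * (m * ffun d) = (d * m) * ffun d by ring,
          Nat.mul_div_cancel_left _ (by positivity)]
      rw [this]
      exact gcd_ffun d hd

/-- for 1 ≤ P and N > 2P+1, the condition "for every divisor d > 1 of N
there is an integer n with P+1 ≤ n ≤ N−P−1, N ∣ d·n and gcd(d, d·n/N) = 1" is
equivalent to H(N) ≥ P+1. -/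
theorem stmt13 (P N : ℕ) (hP : 1 ≤ P) (hN : 2 * P + 1 < N) :
    (∀ d : ℕ, d ∣ N → 1 < d →
        ∃ n : ℕ, P + 1 ≤ n ∧ n ≤ N - P - 1 ∧ N ∣ d * n ∧ Nat.gcd d (d * n / N) = 1) ↔
      ((P : ℝ) + 1 ≤ Hfun N) := by
  have hN0 : 0 < N := by omega
  have hN1 : 1 < N := by omega
  have hne : (hfun '' {d : ℕ | d ∣ N ∧ 1 < d}).Nonempty :=
    ⟨hfun N, N, ⟨dvd_refl N, hN1⟩, rfl⟩
  have hbdd : BddAbove (hfun '' {d : ℕ | d ∣ N ∧ 1 < d}) := by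
    refine ⟨6, ?_⟩
    rintro x ⟨d, ⟨hdN, hd1⟩, rfl⟩
    have hf0 : (0:ℝ) < ffun d := by exact_mod_cast ffun_pos d hd1
    rw [hfun_eq d hd1, div_le_iff₀ hf0]
    exact_mod_cast le_six_ffun d hd1
  have hsup_pos : 0 < sSup (hfun '' {d : ℕ | d ∣ N ∧ 1 < d}) := by
    have h1 : hfun N ≤ sSup (hfun '' {d : ℕ | d ∣ N ∧ 1 < d}) :=
      le_csSup hbdd ⟨N, ⟨dvd_refl N, hN1⟩, rfl⟩
    have hf0 : (0:ℝ) < ffun N := by exact_mod_cast ffun_pos N hN1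
    have h2 : 0 < hfun N := by
      rw [hfun_eq N hN1]
      exact div_pos (by exact_mod_cast hN0) hf0
    linarith
  have hP1 : (0:ℝ) < (P:ℝ) + 1 := by positivity
  have bridge : ∀ d, d ∣ N → 1 < d →
      (hfun d ≤ (N:ℝ) / ((P:ℝ)+1) ↔ P + 1 ≤ (N / d) * ffun d) := by
    intro d hdN hd1
    have hd0 : 0 < d := by omega
    obtain ⟨m, hm⟩ := hdN
    have hmdiv : N / d = m := by rw [hm, Nat.mul_div_cancel_left m hd0]
    have hf0 : (0:ℝ) < ffun d := by exact_mod_cast ffun_pos d hd1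
    rw [hmdiv, hfun_eq d hd1, div_le_div_iff₀ hf0 hP1]
    constructor
    · intro h
      have hnat : d * (P+1) ≤ N * ffun d := by exact_mod_cast h
      rw [hm, mul_assoc] at hnat
      exact Nat.le_of_mul_le_mul_left hnat hd0
    · intro h
      have hnat : d * (P+1) ≤ N * ffun d := by
        rw [hm, mul_assoc]
        exact Nat.mul_le_mul_left d h
      exact_mod_cast hnat
  have hH : ((P:ℝ)+1 ≤ Hfun N) ↔
      ∀ x ∈ hfun '' {d : ℕ | d ∣ N ∧ 1 < d}, x ≤ (N:ℝ)/((P:ℝ)+1) := by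
    rw [Hfun, le_div_iff₀ hsup_pos,
      show ((P:ℝ)+1) * sSup (hfun '' {d : ℕ | d ∣ N ∧ 1 < d}) ≤ (N:ℝ) ↔
          sSup (hfun '' {d : ℕ | d ∣ N ∧ 1 < d}) ≤ (N:ℝ)/((P:ℝ)+1) by
        rw [le_div_iff₀ hP1, mul_comm],
      csSup_le_iff hbdd hne]
  rw [hH]
  constructor
  · intro h x hx
    obtain ⟨d, ⟨hdN, hd1⟩, rfl⟩ := hx
    exact (bridge d hdN hd1).mpr ((keyC P N d hP hN0 hdN hd1).mp (h d hdN hd1))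
  · intro h d hdN hd1
    exact (keyC P N d hP hN0 hdN hd1).mpr
      ((bridge d hdN hd1).mp (h _ ⟨d, ⟨hdN, hd1⟩, rfl⟩))
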